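/- For every prime p, there are infinitely many indices n such that p divides a(n), where a is the Yellowstone sequence. -/

import Mathlib

/-- The Yellowstone sequence: a 1 = 1, a 2 = 2, a 3 = 3, and for n ≥ 4,
`a n` is the least positive integer not among `a 1, …, a (n-1)` which shares
a common factor with `a (n-2)` and is coprime to `a (n-1)`. -/
def IsYellowstone (a : ℕ → ℕ) : Prop :=
  a 1 = 1 ∧ a 2 = 2 ∧ a 3 = 3 ∧
  ∀ n, 4 ≤ n →
    IsLeast {k : ℕ | 0 < k ∧ (∀ m, 1 ≤ m → m < n → a m ≠ k) ∧
      1 < Nat.gcd k (a (n - 2)) ∧ Nat.gcd k (a (n - 1)) = 1} (a n)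

namespace YellowstoneAux

variable {a : ℕ → ℕ}

lemma pos (ha : IsYellowstone a) : ∀ n, 1 ≤ n → 0 < a n := by
  obtain ⟨h1, h2, h3, h4⟩ := ha
  intro n hn
  by_cases h : 4 ≤ n
  · exact ((h4 n h).1).1
  · push_neg at h
    interval_cases n <;> simp [h1, h2, h3]

lemma not_before (ha : IsYellowstone a) : ∀ m n, 1 ≤ m → m < n → a m ≠ a n := by
  intro m n h1 h2
  by_cases h : 4 ≤ n
  · exact ((ha.2.2.2 n h).1.2.1 m h1 h2)
  · push_neg at h
    have h2' : 2 ≤ n := by omega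
    interval_cases n <;> interval_cases m <;>
      simp [ha.1, ha.2.1, ha.2.2.1]

lemma coprime_succ (ha : IsYellowstone a) : ∀ n, 1 ≤ n → Nat.gcd (a (n+1)) (a n) = 1 := by
  intro n hn
  by_cases h : 3 ≤ n
  · have := ((ha.2.2.2 (n+1) (by omega)).1).2.2.2
    have e : n + 1 - 1 = n := by omega
    rwa [e] at this
  · push_neg at h
    interval_cases n <;> simp [ha.1, ha.2.1, ha.2.2.1]

lemma gcd_two (ha : IsYellowstone a) : ∀ n, 2 ≤ n → 1 < Nat.gcd (a (n+2)) (a n) := by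
  intro n hn
  have := ((ha.2.2.2 (n+2) (by omega)).1).2.2.1
  have e : n + 2 - 2 = n := by omega
  rwa [e] at this

lemma minimal (ha : IsYellowstone a) (n : ℕ) (hn : 4 ≤ n) (k : ℕ) (hk : 0 < k)
    (h1 : ∀ m, 1 ≤ m → m < n → a m ≠ k) (h2 : 1 < Nat.gcd k (a (n-2)))
    (h3 : Nat.gcd k (a (n-1)) = 1) : a n ≤ k :=
  (ha.2.2.2 n hn).2 ⟨hk, h1, h2, h3⟩

lemma eventually_gt (ha : IsYellowstone a) (B : ℕ) : ∃ N, ∀ n, N ≤ n → B < a n := by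
  have hfin : {n | 1 ≤ n ∧ a n ≤ B}.Finite := by
    apply Set.Finite.of_finite_image (f := a)
    · apply Set.Finite.subset (Set.finite_Icc 1 B)
      rintro x ⟨n, ⟨hn1, hn2⟩, rfl⟩
      exact ⟨pos ha n hn1, hn2⟩
    · rintro m ⟨hm1, _⟩ n ⟨hn1, _⟩ h
      by_contra hne
      rcases lt_or_gt_of_ne hne with hlt | hgt
      · exact not_before ha m n hm1 hlt h
      · exact not_before ha n m hn1 hgt h.symm
  obtain ⟨b, hb⟩ := hfin.bddAbove
  refine ⟨b + 1, fun n hn => ?_⟩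
  by_contra hle
  push_neg at hle
  have hmem : n ∈ {n | 1 ≤ n ∧ a n ≤ B} := ⟨by omega, hle⟩
  have := hb hmem
  omega

end YellowstoneAux

open YellowstoneAux in
theorem yellowstone_infinitely_many_multiples (a : ℕ → ℕ) (ha : IsYellowstone a)
    (p : ℕ) (hp : p.Prime) : {n : ℕ | 1 ≤ n ∧ p ∣ a n}.Infinite := by
  by_contra hfin
  rw [Set.not_infinite] at hfin
  obtain ⟨b, hb⟩ := hfin.bddAbove
  set N₀ := b + 5 with hN₀def
  have hpnd : ∀ n, N₀ ≤ n → ¬ p ∣ a n := by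
    intro n hn hd
    have hmem : n ∈ {n : ℕ | 1 ≤ n ∧ p ∣ a n} := ⟨by omega, hd⟩
    have := hb hmem
    omega
  set C := (Finset.range N₀).sup a with hCdef
  have hCle : ∀ m, m < N₀ → a m ≤ C := fun m hm =>
    Finset.le_sup (Finset.mem_range.mpr hm)
  set P := p ^ (C + 1) with hPdef
  have hPC : C < P := lt_of_lt_of_le (Nat.lt_pow_self (n := C) hp.one_lt)
    (Nat.pow_le_pow_right hp.pos (by omega))
  have hPpos : 0 < P := Nat.pow_pos hp.pos
  -- terms eventually not equal to 1
  have hne1 : ∀ n, 2 ≤ n → a n ≠ 1 := by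
    intro n hn h
    exact not_before ha 1 n le_rfl (by omega) (by rw [ha.1, h])
  -- Claim 1
  have claim1 : ∀ n, N₀ + 2 ≤ n → a n ≤ P * Nat.minFac (a (n-2)) := by
    intro n hn
    have hn2 : 2 ≤ n - 2 := by omega
    have ha2pos : 0 < a (n-2) := pos ha _ (by omega)
    have ha2ne1 : a (n-2) ≠ 1 := hne1 _ hn2
    set q := Nat.minFac (a (n-2)) with hq
    have hqp : q.Prime := Nat.minFac_prime ha2ne1
    have hqd : q ∣ a (n-2) := Nat.minFac_dvd _
    have hcop : Nat.gcd (a (n-1)) (a (n-2)) = 1 := by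
      have := coprime_succ ha (n-2) (by omega)
      have e : n - 2 + 1 = n - 1 := by omega
      rwa [e] at this
    refine minimal ha n (by omega) (P * q) (Nat.mul_pos hPpos hqp.pos) ?_ ?_ ?_
    · intro m hm1 hm2 heq
      have hpd : p ∣ a m := by
        rw [heq, hPdef]
        exact dvd_mul_of_dvd_left (dvd_pow_self p (by omega)) _
      have hmN : m < N₀ := by
        by_contra hge
        exact hpnd m (by omega) hpd
      have h1 : a m ≤ C := hCle m hmN
      have h2 : P ≤ P * q := Nat.le_mul_of_pos_right _ hqp.pos
      omega
    · have hdq : q ∣ Nat.gcd (P*q) (a (n-2)) := Nat.dvd_gcd (dvd_mul_left q P) hqd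
      have hgpos : 0 < Nat.gcd (P*q) (a (n-2)) := Nat.gcd_pos_of_pos_right _ ha2pos
      have := Nat.le_of_dvd hgpos hdq
      have := hqp.two_le
      omega
    · have h1 : Nat.Coprime p (a (n-1)) :=
        (Nat.Prime.coprime_iff_not_dvd hp).mpr (hpnd (n-1) (by omega))
      have h2 : Nat.Coprime q (a (n-1)) := by
        refine (Nat.Prime.coprime_iff_not_dvd hqp).mpr (fun hd => ?_)
        have : q ∣ Nat.gcd (a (n-1)) (a (n-2)) := Nat.dvd_gcd hd hqd
        rw [hcop] at this
        have := Nat.eq_one_of_dvd_one this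
        have := hqp.two_le
        omega
      exact Nat.Coprime.mul (h1.pow_left _) h2
  -- Claim 2 : minFac tends to infinity
  have claim2 : ∀ B, ∃ N, N₀ ≤ N ∧ ∀ n, N ≤ n → B < Nat.minFac (a n) := by
    intro B
    obtain ⟨N', hN'⟩ := eventually_gt ha (P * B)
    refine ⟨max N' N₀, le_max_right _ _, fun n hn => ?_⟩
    have hn1 : N' ≤ n := le_trans (le_max_left _ _) hn
    have hn2 : N₀ ≤ n := le_trans (le_max_right _ _) hn
    have h1 : a (n+2) ≤ P * Nat.minFac (a n) := by
      have := claim1 (n+2) (by omega)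
      have e : n + 2 - 2 = n := by omega
      rwa [e] at this
    have h2 : P * B < a (n+2) := hN' (n+2) (by omega)
    exact Nat.lt_of_mul_lt_mul_left (a := P) (by omega)
  -- eventually odd
  obtain ⟨N₂, hN₂0, hN₂⟩ := claim2 2
  have hodd : ∀ n, N₂ ≤ n → ¬ 2 ∣ a n := by
    intro n hn hd
    have h1 := Nat.minFac_le_of_dvd le_rfl hd
    have h2 := hN₂ n hn
    omega
  set C₂ := (Finset.range N₂).sup a with hC₂def
  have hC₂le : ∀ m, m < N₂ → a m ≤ C₂ := fun m hm =>
    Finset.le_sup (Finset.mem_range.mpr hm)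
  -- Claim 3
  obtain ⟨N', hN'0, hN'⟩ := claim2 C₂
  set N₃ := max (max N₂ N') N₀ + 2 with hN₃def
  have claim3 : ∀ n, N₃ ≤ n → a n ≤ 2 * Nat.minFac (a (n-2)) := by
    intro n hn
    have hnN₂ : N₂ ≤ n - 2 := by omega
    have hnN' : N' ≤ n - 2 := by omega
    have hnN₀ : N₀ ≤ n - 2 := by omega
    have ha2pos : 0 < a (n-2) := pos ha _ (by omega)
    have ha2ne1 : a (n-2) ≠ 1 := hne1 _ (by omega)
    set q := Nat.minFac (a (n-2)) with hq
    have hqp : q.Prime := Nat.minFac_prime ha2ne1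
    have hqd : q ∣ a (n-2) := Nat.minFac_dvd _
    have hqC₂ : C₂ < q := hN' (n-2) hnN'
    have hcop : Nat.gcd (a (n-1)) (a (n-2)) = 1 := by
      have := coprime_succ ha (n-2) (by omega)
      have e : n - 2 + 1 = n - 1 := by omega
      rwa [e] at this
    refine minimal ha n (by omega) (2 * q) (Nat.mul_pos two_pos hqp.pos) ?_ ?_ ?_
    · intro m hm1 hm2 heq
      have h2d : 2 ∣ a m := by rw [heq]; exact Dvd.intro q rfl
      have hmN : m < N₂ := by
        by_contra hge
        exact hodd m (by omega) h2d
      have h1 : a m ≤ C₂ := hC₂le m hmN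
      have := hqp.two_le
      omega
    · have hdq : q ∣ Nat.gcd (2*q) (a (n-2)) := Nat.dvd_gcd (dvd_mul_left q 2) hqd
      have hgpos : 0 < Nat.gcd (2*q) (a (n-2)) := Nat.gcd_pos_of_pos_right _ ha2pos
      have := Nat.le_of_dvd hgpos hdq
      have := hqp.two_le
      omega
    · have h1 : Nat.Coprime 2 (a (n-1)) :=
        (Nat.Prime.coprime_iff_not_dvd Nat.prime_two).mpr
          (hodd (n-1) (by omega))
      have h2 : Nat.Coprime q (a (n-1)) := by
        refine (Nat.Prime.coprime_iff_not_dvd hqp).mpr (fun hd => ?_)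
        have : q ∣ Nat.gcd (a (n-1)) (a (n-2)) := Nat.dvd_gcd hd hqd
        rw [hcop] at this
        have := Nat.eq_one_of_dvd_one this
        have := hqp.two_le
        omega
      exact Nat.Coprime.mul h1 h2
  -- Claim 4 : eventually every term is prime and divides the term two before
  set N₄ := max N₃ (N₂ + 2) with hN₄def
  have claim4 : ∀ n, N₄ ≤ n → (a n).Prime ∧ a n ∣ a (n-2) := by
    intro n hn
    have hnN₃ : N₃ ≤ n := by omega
    have hnN₂ : N₂ + 2 ≤ n := by omega
    have hgcd : 1 < Nat.gcd (a n) (a (n-2)) := by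
      have := gcd_two ha (n-2) (by omega)
      have e : n - 2 + 2 = n := by omega
      rwa [e] at this
    set r := Nat.minFac (Nat.gcd (a n) (a (n-2))) with hr
    have hrp : r.Prime := Nat.minFac_prime (by omega)
    have hr1 : r ∣ a n := (Nat.minFac_dvd _).trans (Nat.gcd_dvd_left _ _)
    have hr2 : r ∣ a (n-2) := (Nat.minFac_dvd _).trans (Nat.gcd_dvd_right _ _)
    have hqr : Nat.minFac (a (n-2)) ≤ r := Nat.minFac_le_of_dvd hrp.two_le hr2
    have hbnd : a n ≤ 2 * Nat.minFac (a (n-2)) := claim3 n hnN₃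
    have hoddn : ¬ 2 ∣ a n := hodd n (by omega)
    have hpos : 0 < a n := pos ha n (by omega)
    have hle : r ≤ a n := Nat.le_of_dvd hpos hr1
    have hne2r : a n ≠ 2 * r := by
      intro h
      exact hoddn ⟨r, h⟩
    have hlt : a n < 2 * r := by omega
    obtain ⟨s, hs⟩ := hr1
    have hs1 : s = 1 := by
      have hs0 : s ≠ 0 := by rintro rfl; simp at hs; omega
      have hs2 : s < 2 := by
        by_contra hge
        push_neg at hge
        have : 2 * r ≤ r * s := by nlinarith
        omega
      omega
    rw [hs, hs1, mul_one]
    exact ⟨hrp, hr2⟩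
  -- Final contradiction
  have h1 := claim4 (N₄ + 2) (by omega)
  have h2 := claim4 N₄ le_rfl
  have e : N₄ + 2 - 2 = N₄ := by omega
  rw [e] at h1
  have heq : a (N₄ + 2) = a N₄ :=
    (Nat.prime_dvd_prime_iff_eq h1.1 h2.1).mp h1.2
  have hN₄1 : 1 ≤ N₄ := by
    have := le_max_right N₃ (N₂ + 2)
    omega
  exact not_before ha N₄ (N₄ + 2) hN₄1 (by omega) heq.symm
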